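/- For a cardinal κ and an ordinal γ < κ⁺, the family E_γ = { [κ^{1+α}·ξ, κ^{1+α}·(ξ+1)) : α ≤ γ, κ^{1+α}·ξ < κ^γ } of intervals of ordinals (with ordinal exponentiation) is well-founded, ∩-closed, tree-like and chain-closed, and the rank of the interval [κ^{1+α}·ξ, κ^{1+α}·(ξ+1)) with respect to ⊊ in E_γ is α. -/

import Mathlib

open Set Topology

/-- `famU 𝒜 A` = members of `𝒜` included in `A`. -/
def famU {X : Type*} (𝒜 : Set (Set X)) (A : Set X) : Set (Set X) := {B ∈ 𝒜 | B ⊆ A}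

/-- The coarsest topology on `𝒜` making each `U(A)`, `A ∈ 𝒜`, clopen. -/
def famTop {X : Type*} (𝒜 : Set (Set X)) : TopologicalSpace 𝒜 :=
  TopologicalSpace.generateFrom
    {s | ∃ A ∈ 𝒜, s = (Subtype.val ⁻¹' famU 𝒜 A : Set 𝒜) ∨
      s = ((Subtype.val ⁻¹' famU 𝒜 A)ᶜ : Set 𝒜)}

/-- `A ∩ B ∈ 𝒜 ∪ {∅}` for all `A, B ∈ 𝒜`. -/
def InterClosed {X : Type*} (𝒜 : Set (Set X)) : Prop :=
  ∀ A ∈ 𝒜, ∀ B ∈ 𝒜, A ∩ B ∈ 𝒜 ∪ {(∅ : Set X)}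

/-- Any two members meeting each other are comparable. -/
def TreeLike {X : Type*} (𝒜 : Set (Set X)) : Prop :=
  ∀ A ∈ 𝒜, ∀ B ∈ 𝒜, (A ∩ B).Nonempty → A ⊆ B ∨ B ⊆ A

/-- The union of any nonempty `⊆`-chain in `𝒜` belongs to `𝒜`. -/
def ChainClosed {X : Type*} (𝒜 : Set (Set X)) : Prop :=
  ∀ ℬ ⊆ 𝒜, ℬ.Nonempty → IsChain (· ⊆ ·) ℬ → ⋃₀ ℬ ∈ 𝒜

/-- A space is scattered iff every nonempty subset has a point isolated in it. -/
def IsScatteredSpace (Y : Type*) [TopologicalSpace Y] : Prop :=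
  ∀ S : Set Y, S.Nonempty → ∃ x ∈ S, ∃ t : Set Y, IsOpen t ∧ t ∩ S = {x}

/-- The `o`-th Cantor–Bendixson level: isolated points of the complement of earlier levels. -/
noncomputable def cbLevel (Y : Type*) [TopologicalSpace Y] (o : Ordinal.{u}) : Set Y :=
  {x | (∀ p, (h : p < o) → x ∉ cbLevel Y p) ∧
    ∃ t : Set Y, IsOpen t ∧ t ∩ {y | ∀ p, (h : p < o) → y ∉ cbLevel Y p} = {x}}
termination_by o

/-- The Cantor–Bendixson height: least level that is empty. -/
noncomputable def cbHeight (Y : Type*) [TopologicalSpace Y] : Ordinal.{u} :=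
  sInf {o | cbLevel Y o = ∅}

namespace Stmt16Aux

open Ordinal

variable {k : Ordinal.{0}}

lemma lt_succ' (ξ : Ordinal) : ξ < ξ + 1 := by
  rw [Ordinal.add_one_eq_succ]; exact Order.lt_succ ξ

lemma block_lt (hk : 1 < k) (e ξ : Ordinal) : k ^ e * ξ < k ^ e * (ξ + 1) :=
  (mul_lt_mul_iff_right₀ (Ordinal.opow_pos e (zero_lt_one.trans hk))).2 (lt_succ' ξ)

lemma block_subset (hk : 1 < k) {a b ξ η x : Ordinal} (hab : a ≤ b)
    (hx1 : x ∈ Ico (k ^ a * ξ) (k ^ a * (ξ + 1)))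
    (hx2 : x ∈ Ico (k ^ b * η) (k ^ b * (η + 1))) :
    Ico (k ^ a * ξ) (k ^ a * (ξ + 1)) ⊆ Ico (k ^ b * η) (k ^ b * (η + 1)) := by
  have hl : (0 : Ordinal) < k ^ a := Ordinal.opow_pos a (zero_lt_one.trans hk)
  obtain ⟨δ, rfl⟩ : ∃ δ, b = a + δ := ⟨b - a, (Ordinal.add_sub_cancel_of_le hab).symm⟩
  have hb1 : k ^ (a + δ) * η = k ^ a * (k ^ δ * η) := by rw [opow_add, mul_assoc]
  have hb2 : k ^ (a + δ) * (η + 1) = k ^ a * (k ^ δ * η + k ^ δ) := by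
    rw [opow_add, mul_assoc, mul_add_one]
  obtain ⟨h1, h2⟩ := hx1
  obtain ⟨h3, h4⟩ := hx2
  rw [hb1] at h3; rw [hb2] at h4
  have e1 : k ^ δ * η ≤ ξ := by
    have := (mul_lt_mul_iff_right₀ hl).1 (h3.trans_lt h2)
    rwa [Ordinal.add_one_eq_succ, Order.lt_succ_iff] at this
  have e2 : ξ + 1 ≤ k ^ δ * η + k ^ δ := by
    have := (mul_lt_mul_iff_right₀ hl).1 (h1.trans_lt h4)
    rw [Ordinal.add_one_eq_succ, Order.succ_le_iff]; exact this
  apply Set.Ico_subset_Ico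
  · rw [hb1]; exact (mul_le_mul_iff_right₀ hl).2 e1
  · rw [hb2]; exact (mul_le_mul_iff_right₀ hl).2 e2

lemma subset_le (hk : 1 < k) {a b ξ η : Ordinal}
    (h : Ico (k ^ a * ξ) (k ^ a * (ξ + 1)) ⊆ Ico (k ^ b * η) (k ^ b * (η + 1))) :
    a ≤ b ∧ k ^ b * η ≤ k ^ a * ξ := by
  obtain ⟨h1, h2⟩ := (Set.Ico_subset_Ico_iff (block_lt hk a ξ)).1 h
  refine ⟨?_, h1⟩
  rw [mul_add_one, mul_add_one] at h2
  have h3 : k ^ a * ξ + k ^ a ≤ k ^ a * ξ + k ^ b :=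
    h2.trans (add_le_add_left h1 _)
  exact (Ordinal.opow_le_opow_iff_right hk).1 ((add_le_add_iff_left _).1 h3)

lemma eq_of_subset_same (hk : 1 < k) {a ξ η : Ordinal}
    (h : Ico (k ^ a * ξ) (k ^ a * (ξ + 1)) ⊆ Ico (k ^ a * η) (k ^ a * (η + 1))) : ξ = η := by
  have hl : (0 : Ordinal) < k ^ a := Ordinal.opow_pos a (zero_lt_one.trans hk)
  obtain ⟨h1, h2⟩ := (Set.Ico_subset_Ico_iff (block_lt hk a ξ)).1 h
  have e1 : η ≤ ξ := (mul_le_mul_iff_right₀ hl).1 h1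
  have e2 : ξ + 1 ≤ η + 1 := (mul_le_mul_iff_right₀ hl).1 h2
  have e3 : ξ ≤ η := by
    rwa [Ordinal.add_one_eq_succ, Ordinal.add_one_eq_succ, Order.succ_le_succ_iff] at e2
  exact le_antisymm e3 e1

lemma ssubset_lt (hk : 1 < k) {a b ξ η : Ordinal}
    (h : Ico (k ^ a * ξ) (k ^ a * (ξ + 1)) ⊂ Ico (k ^ b * η) (k ^ b * (η + 1))) : a < b := by
  have hab := (subset_le hk h.subset).1
  rcases hab.lt_or_eq with h' | rfl
  · exact h'
  · obtain rfl := eq_of_subset_same hk h.subset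
    exact absurd rfl h.ne

lemma block_uniq (hk : 1 < k) {a b ξ η : Ordinal}
    (h : Ico (k ^ a * ξ) (k ^ a * (ξ + 1)) = Ico (k ^ b * η) (k ^ b * (η + 1))) : a = b :=
  le_antisymm (subset_le hk h.le).1 (subset_le hk h.ge).1

end Stmt16Aux

open Stmt16Aux Ordinal in
/-- For an infinite cardinal `κ` and `γ < κ⁺`, the family
`E_γ = {[κ^(1+α)·ξ, κ^(1+α)·(ξ+1)) : α ≤ γ, κ^(1+α)·ξ < κ^γ}` (ordinal arithmetic) is
well-founded, `∩`-closed, tree-like and chain-closed, and the rank of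
`[κ^(1+α)·ξ, κ^(1+α)·(ξ+1))` in `⟨E_γ, ⊊⟩` is `α`. -/
theorem stmt16 (c : Cardinal.{0}) (hc : Cardinal.aleph0 ≤ c) (γ : Ordinal.{0})
    (hγ : γ < (Order.succ c).ord) :
    ∃ hwf : WellFounded (fun A B :
        ↥{S : Set Ordinal.{0} | ∃ α ξ : Ordinal, α ≤ γ ∧ c.ord ^ (1 + α) * ξ < c.ord ^ γ ∧
          S = Set.Ico (c.ord ^ (1 + α) * ξ) (c.ord ^ (1 + α) * (ξ + 1))} =>
        (A : Set Ordinal) ⊂ (B : Set Ordinal)),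
      InterClosed {S : Set Ordinal.{0} | ∃ α ξ : Ordinal, α ≤ γ ∧
          c.ord ^ (1 + α) * ξ < c.ord ^ γ ∧
          S = Set.Ico (c.ord ^ (1 + α) * ξ) (c.ord ^ (1 + α) * (ξ + 1))} ∧
      TreeLike {S : Set Ordinal.{0} | ∃ α ξ : Ordinal, α ≤ γ ∧
          c.ord ^ (1 + α) * ξ < c.ord ^ γ ∧
          S = Set.Ico (c.ord ^ (1 + α) * ξ) (c.ord ^ (1 + α) * (ξ + 1))} ∧
      ChainClosed {S : Set Ordinal.{0} | ∃ α ξ : Ordinal, α ≤ γ ∧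
          c.ord ^ (1 + α) * ξ < c.ord ^ γ ∧
          S = Set.Ico (c.ord ^ (1 + α) * ξ) (c.ord ^ (1 + α) * (ξ + 1))} ∧
      ∀ (α ξ : Ordinal) (_ : α ≤ γ) (_ : c.ord ^ (1 + α) * ξ < c.ord ^ γ)
        (h : Set.Ico (c.ord ^ (1 + α) * ξ) (c.ord ^ (1 + α) * (ξ + 1)) ∈
          {S : Set Ordinal.{0} | ∃ α ξ : Ordinal, α ≤ γ ∧ c.ord ^ (1 + α) * ξ < c.ord ^ γ ∧
            S = Set.Ico (c.ord ^ (1 + α) * ξ) (c.ord ^ (1 + α) * (ξ + 1))}),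
        (hwf.apply (⟨_, h⟩ :
          ↥{S : Set Ordinal.{0} | ∃ α ξ : Ordinal, α ≤ γ ∧ c.ord ^ (1 + α) * ξ < c.ord ^ γ ∧
            S = Set.Ico (c.ord ^ (1 + α) * ξ) (c.ord ^ (1 + α) * (ξ + 1))})).rank =
          Ordinal.lift.{1} α := by
  classical
  set κ : Ordinal := c.ord with hκdef
  have hκ : 1 < κ := lt_of_lt_of_le Ordinal.one_lt_omega0 (Cardinal.omega0_le_ord.2 hc)
  have hκ0 : (0 : Ordinal) < κ := zero_lt_one.trans hκ
  set 𝒜 : Set (Set Ordinal) := {S | ∃ α ξ : Ordinal, α ≤ γ ∧ κ ^ (1 + α) * ξ < κ ^ γ ∧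
    S = Set.Ico (κ ^ (1 + α) * ξ) (κ ^ (1 + α) * (ξ + 1))} with h𝒜
  -- representation function
  have hrepex : ∀ A : ↥𝒜, ∃ p : Ordinal × Ordinal,
      (A : Set Ordinal) = Set.Ico (κ ^ (1 + p.1) * p.2) (κ ^ (1 + p.1) * (p.2 + 1)) := by
    rintro ⟨A, α, ξ, h1, h2, h3⟩; exact ⟨⟨α, ξ⟩, h3⟩
  choose rep hrep using hrepex
  -- well-foundedness
  have hwf : WellFounded (fun A B : ↥𝒜 => (A : Set Ordinal) ⊂ (B : Set Ordinal)) := by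
    refine Subrelation.wf (r := InvImage (· < ·) fun A => (rep A).1) ?_
      (InvImage.wf _ Ordinal.lt_wf)
    intro A B hAB
    have h1 : (A : Set Ordinal) ⊂ (B : Set Ordinal) := hAB
    rw [hrep A, hrep B] at h1
    exact (add_lt_add_iff_left (1 : Ordinal)).1 (ssubset_lt hκ h1)
  -- tree-likeness core
  have core : TreeLike 𝒜 := by
    rintro A ⟨α, ξ, -, -, rfl⟩ B ⟨β, η, -, -, rfl⟩ ⟨x, hxA, hxB⟩
    rcases le_total α β with h | h
    · exact Or.inl (block_subset hκ (add_le_add_right h 1) hxA hxB)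
    · exact Or.inr (block_subset hκ (add_le_add_right h 1) hxB hxA)
  refine ⟨hwf, ?_, core, ?_, ?_⟩
  · -- InterClosed
    intro A hA B hB
    rcases Set.eq_empty_or_nonempty (A ∩ B) with h | h
    · exact Or.inr h
    · rcases core A hA B hB h with hs | hs
      · exact Or.inl (by rwa [Set.inter_eq_left.2 hs])
      · exact Or.inl (by rwa [Set.inter_eq_right.2 hs])
  · -- ChainClosed
    intro ℬ hℬA hne hchain
    set J : Set Ordinal := {o | ∃ B ∈ ℬ, IsLeast B o} with hJ
    have hJne : J.Nonempty := by
      obtain ⟨B1, hB1⟩ := hne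
      obtain ⟨α, ξ, -, -, rfl⟩ := hℬA hB1
      exact ⟨κ ^ (1 + α) * ξ, _, hB1,
        Set.left_mem_Ico.2 (block_lt hκ _ _), fun y hy => hy.1⟩
    obtain ⟨a0, ⟨B0, hB0ℬ, hB0least⟩, hmin⟩ := Ordinal.lt_wf.has_min J hJne
    set S : Set Ordinal := {α | ∃ ξ, α ≤ γ ∧ κ ^ (1 + α) * ξ < κ ^ γ ∧ κ ^ (1 + α) * ξ = a0 ∧
      Set.Ico (κ ^ (1 + α) * ξ) (κ ^ (1 + α) * (ξ + 1)) ∈ ℬ} with hSdef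
    have claimA : ∀ B ∈ ℬ, B0 ⊆ B → ∃ α ∈ S, B = Set.Ico a0 (a0 + κ ^ (1 + α)) := by
      intro B hB hsub
      obtain ⟨α, ξ, hαγ, hξ, rfl⟩ := hℬA hB
      have hl : IsLeast (Set.Ico (κ ^ (1 + α) * ξ) (κ ^ (1 + α) * (ξ + 1))) (κ ^ (1 + α) * ξ) :=
        ⟨Set.left_mem_Ico.2 (block_lt hκ _ _), fun y hy => hy.1⟩
      have h1 : κ ^ (1 + α) * ξ ≤ a0 := hl.2 (hsub hB0least.1)
      have h2 : a0 ≤ κ ^ (1 + α) * ξ := not_lt.1 (hmin _ ⟨_, hB, hl⟩)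
      have he : κ ^ (1 + α) * ξ = a0 := le_antisymm h1 h2
      refine ⟨α, ⟨ξ, hαγ, hξ, he, hB⟩, ?_⟩
      rw [mul_add_one, he]
    obtain ⟨α0, hα0S, hB0eq⟩ := claimA B0 hB0ℬ (le_refl _)
    have memS : ∀ α ∈ S, Set.Ico a0 (a0 + κ ^ (1 + α)) ∈ ℬ ∧ α ≤ γ ∧ a0 < κ ^ γ := by
      rintro α ⟨ξ, hαγ, hξ, he, hmem⟩
      refine ⟨?_, hαγ, he ▸ hξ⟩
      rwa [mul_add_one, he] at hmem
    have claimB : ∀ B ∈ ℬ, ∃ α ∈ S, B ⊆ Set.Ico a0 (a0 + κ ^ (1 + α)) := by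
      intro B hB
      rcases eq_or_ne B B0 with rfl | hne'
      · exact ⟨α0, hα0S, hB0eq.le⟩
      rcases hchain hB hB0ℬ hne' with h | h
      · exact ⟨α0, hα0S, h.trans hB0eq.le⟩
      · obtain ⟨α, hαS, hBeq⟩ := claimA B hB h
        exact ⟨α, hαS, hBeq.le⟩
    have ha0γ : a0 < κ ^ γ := (memS α0 hα0S).2.2
    by_cases hmax : ∃ αm ∈ S, ∀ α ∈ S, α ≤ αm
    · obtain ⟨αm, hαmS, hαmax⟩ := hmax
      have hun : ⋃₀ ℬ = Set.Ico a0 (a0 + κ ^ (1 + αm)) := by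
        apply Set.Subset.antisymm
        · apply Set.sUnion_subset
          intro B hB
          obtain ⟨α, hαS, hsub⟩ := claimB B hB
          refine hsub.trans (Set.Ico_subset_Ico_right ?_)
          exact add_le_add_right ((Ordinal.opow_le_opow_iff_right hκ).2
            (add_le_add_right (hαmax α hαS) 1)) _
        · exact Set.subset_sUnion_of_mem (memS αm hαmS).1
      rw [hun]
      exact hℬA (memS αm hαmS).1
    · push_neg at hmax
      have hSne : S.Nonempty := ⟨α0, hα0S⟩
      have hbdd : BddAbove S := ⟨γ, fun α hα => (memS α hα).2.1⟩
      set αs := sSup S with hαs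
      have hαsγ : αs ≤ γ := csSup_le hSne fun α hα => (memS α hα).2.1
      have hltαs : ∀ α ∈ S, α < αs := by
        intro α hα
        obtain ⟨α', hα'S, hα'⟩ := hmax α hα
        exact lt_of_lt_of_le hα' (le_csSup hbdd hα'S)
      have hcof : ∀ b < αs, ∃ α ∈ S, b < α := by
        intro b hb
        by_contra hcon
        push_neg at hcon
        exact absurd (csSup_le hSne hcon) (not_le.2 hb)
      have hαslim : Order.IsSuccLimit αs := by
        rw [Ordinal.isSuccLimit_iff]; constructor
        · rintro h0
          rw [h0] at hltαs
          exact (hltαs α0 hα0S).not_ge zero_le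
        · apply Order.isSuccPrelimit_of_succ_lt; intro b hb
          obtain ⟨α, hαS, hbα⟩ := hcof b hb
          exact (Order.succ_le_of_lt hbα).trans_lt (hltαs α hαS)
      have h1lim : Order.IsSuccLimit (1 + αs) := Ordinal.isSuccLimit_add 1 hαslim
      have hcof' : ∀ b < 1 + αs, ∃ α ∈ S, b < 1 + α := by
        intro b hb
        rcases lt_or_ge b 1 with h1 | h1
        · exact ⟨α0, hα0S, h1.trans_le le_self_add⟩
        · have hb' : 1 + (b - 1) = b := Ordinal.add_sub_cancel_of_le h1
          rw [← hb'] at hb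
          have hblt : b - 1 < αs := (add_lt_add_iff_left (1 : Ordinal)).1 hb
          obtain ⟨α, hαS, hα⟩ := hcof _ hblt
          exact ⟨α, hαS, by rw [← hb']; exact (add_lt_add_iff_left (1 : Ordinal)).2 hα⟩
      have hlpos : (0 : Ordinal) < κ ^ (1 + αs) := Ordinal.opow_pos _ hκ0
      have hdvd : ∀ α ∈ S, κ ^ (1 + α) ∣ a0 % κ ^ (1 + αs) := by
        intro α hαS
        have hlts : (1 : Ordinal) + α ≤ 1 + αs := add_le_add_right (hltαs α hαS).le 1
        obtain ⟨ξ, hαγ, hξ, he, -⟩ := hαS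
        have d1 : κ ^ (1 + α) ∣ a0 := ⟨ξ, he.symm⟩
        have dl : κ ^ (1 + α) ∣ κ ^ (1 + αs) := by
          refine ⟨κ ^ ((1 + αs) - (1 + α)), ?_⟩
          have hcan : (1 + α) + ((1 + αs) - (1 + α)) = 1 + αs :=
            Ordinal.add_sub_cancel_of_le hlts
          rw [← opow_add, hcan]
        have d2 : κ ^ (1 + α) ∣ κ ^ (1 + αs) * (a0 / κ ^ (1 + αs)) := dl.mul_right _
        obtain ⟨u, hu⟩ := d1
        obtain ⟨v, hv⟩ := d2
        exact ⟨u - v, by rw [Ordinal.mod_def, hv, hu, ← Ordinal.mul_sub]⟩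
      have hmod : a0 % κ ^ (1 + αs) = 0 := by
        by_contra hr
        have hge : κ ^ (1 + αs) ≤ a0 % κ ^ (1 + αs) := by
          rw [Ordinal.opow_le_of_isSuccLimit (ne_of_gt hκ0) h1lim]
          intro b hb
          obtain ⟨α, hαS, hbα⟩ := hcof' b hb
          exact ((Ordinal.opow_le_opow_iff_right hκ).2 hbα.le).trans
            (Ordinal.le_of_dvd hr (hdvd α hαS))
        exact absurd (Ordinal.mod_lt a0 (ne_of_gt hlpos)) (not_lt.2 hge)
      have hdiveq : κ ^ (1 + αs) * (a0 / κ ^ (1 + αs)) = a0 := by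
        have := Ordinal.div_add_mod a0 (κ ^ (1 + αs))
        rwa [hmod, add_zero] at this
      refine ⟨αs, a0 / κ ^ (1 + αs), hαsγ, ?_, ?_⟩
      · rw [hdiveq]; exact ha0γ
      · rw [mul_add_one, hdiveq]
        apply Set.Subset.antisymm
        · apply Set.sUnion_subset
          intro B hB
          obtain ⟨α, hαS, hsub⟩ := claimB B hB
          refine hsub.trans (Set.Ico_subset_Ico_right ?_)
          exact add_le_add_right ((Ordinal.opow_le_opow_iff_right hκ).2
            (add_le_add_right (hltαs α hαS).le 1)) _
        · rintro x ⟨hx1, hx2⟩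
          have hxe : a0 + (x - a0) = x := Ordinal.add_sub_cancel_of_le hx1
          rw [← hxe] at hx2
          have ht : x - a0 < κ ^ (1 + αs) := (add_lt_add_iff_left a0).1 hx2
          have hnle : ¬ κ ^ (1 + αs) ≤ x - a0 := not_le.2 ht
          rw [Ordinal.opow_le_of_isSuccLimit (ne_of_gt hκ0) h1lim] at hnle
          push_neg at hnle
          obtain ⟨b, hb, hbt⟩ := hnle
          obtain ⟨α, hαS, hbα⟩ := hcof' b hb
          have hx3 : x < a0 + κ ^ (1 + α) := by
            rw [← hxe]
            exact (add_lt_add_iff_left a0).2 (hbt.trans_le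
              ((Ordinal.opow_le_opow_iff_right hκ).2 hbα.le))
          exact Set.mem_sUnion.2 ⟨_, (memS α hαS).1, hx1, hx3⟩
  · -- rank computation
    have main : ∀ β : Ordinal, ∀ ξ : Ordinal, β ≤ γ → κ ^ (1 + β) * ξ < κ ^ γ →
        ∀ h : Set.Ico (κ ^ (1 + β) * ξ) (κ ^ (1 + β) * (ξ + 1)) ∈ 𝒜,
        (hwf.apply ⟨_, h⟩).rank = Ordinal.lift.{1} β := by
      intro β
      induction β using Ordinal.induction with
      | _ β IH =>
      intro ξ hβγ hξ h
      apply le_antisymm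
      · rw [Acc.rank_eq]
        apply Ordinal.iSup_le
        rintro ⟨⟨B, hB⟩, hBx⟩
        obtain ⟨α', ξ', hα', hξ', hBset⟩ := hB
        have hBx' : B ⊂ Set.Ico (κ ^ (1 + β) * ξ) (κ ^ (1 + β) * (ξ + 1)) := hBx
        rw [hBset] at hBx'
        have hlt : α' < β := (add_lt_add_iff_left (1 : Ordinal)).1 (ssubset_lt hκ hBx')
        have hmem' : Set.Ico (κ ^ (1 + α') * ξ') (κ ^ (1 + α') * (ξ' + 1)) ∈ 𝒜 :=
          ⟨α', ξ', hα', hξ', rfl⟩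
        have heq : (⟨B, ⟨α', ξ', hα', hξ', hBset⟩⟩ : ↥𝒜) = ⟨_, hmem'⟩ := Subtype.ext hBset
        have hr : ((hwf.apply (⟨_, h⟩ : ↥𝒜)).inv hBx).rank = Ordinal.lift.{1} α' := by
          have : ((hwf.apply (⟨_, h⟩ : ↥𝒜)).inv hBx) =
              hwf.apply (⟨B, ⟨α', ξ', hα', hξ', hBset⟩⟩ : ↥𝒜) := rfl
          rw [this, heq]
          exact IH α' hlt ξ' (hlt.le.trans hβγ) hξ' hmem'
        rw [hr, ← Ordinal.lift_succ]
        exact Ordinal.lift_le.2 (Order.succ_le_of_lt hlt)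
      · by_contra hn
        rw [not_le] at hn
        obtain ⟨β', hβ'β, hβ'eq⟩ := Ordinal.lt_lift_iff.1 hn
        have hle : (1 : Ordinal) + β' ≤ 1 + β := add_le_add_right hβ'β.le 1
        have hδe : (1 + β') + ((1 + β) - (1 + β')) = 1 + β := Ordinal.add_sub_cancel_of_le hle
        set δ := (1 + β) - (1 + β') with hδ
        have hbase : κ ^ (1 + β') * (κ ^ δ * ξ) = κ ^ (1 + β) * ξ := by
          rw [← mul_assoc, ← opow_add, hδe]
        have hmem' : Set.Ico (κ ^ (1 + β') * (κ ^ δ * ξ)) (κ ^ (1 + β') * (κ ^ δ * ξ + 1)) ∈ 𝒜 :=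
          ⟨β', κ ^ δ * ξ, hβ'β.le.trans hβγ, by rw [hbase]; exact hξ, rfl⟩
        have hsub : Set.Ico (κ ^ (1 + β') * (κ ^ δ * ξ)) (κ ^ (1 + β') * (κ ^ δ * ξ + 1)) ⊂
            Set.Ico (κ ^ (1 + β) * ξ) (κ ^ (1 + β) * (ξ + 1)) := by
          rw [Set.ssubset_iff_subset_ne]
          constructor
          · apply Set.Ico_subset_Ico
            · rw [hbase]
            · rw [mul_add_one, mul_add_one, hbase]
              exact add_le_add_right ((Ordinal.opow_le_opow_iff_right hκ).2 hle) _
          · intro hcontra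
            have := block_uniq hκ hcontra
            exact absurd ((add_lt_add_iff_left (1 : Ordinal)).2 hβ'β) (this ▸ lt_irrefl _)
        have hrel : ((⟨_, hmem'⟩ : ↥𝒜) : Set Ordinal) ⊂ ((⟨_, h⟩ : ↥𝒜) : Set Ordinal) := hsub
        have hlt2 := Acc.rank_lt_of_rel (hwf.apply (⟨_, h⟩ : ↥𝒜)) hrel
        have e : ((hwf.apply (⟨_, h⟩ : ↥𝒜)).inv hrel).rank = Ordinal.lift.{1} β' := by
          have : ((hwf.apply (⟨_, h⟩ : ↥𝒜)).inv hrel) = hwf.apply (⟨_, hmem'⟩ : ↥𝒜) := rfl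
          rw [this]
          exact IH β' hβ'β (κ ^ δ * ξ) (hβ'β.le.trans hβγ) (by rw [hbase]; exact hξ) hmem'
        rw [e, hβ'eq] at hlt2
        exact lt_irrefl _ hlt2
    intro α ξ hα hξ h
    exact main α ξ hα hξ h
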